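/- If B_0 is upper triangular with positive diagonal, and B_k = B_0 + e_i c^T where c = λ e_i − B_0^T e_i with λ > 0 (a perfect intervention at a source node, meaning row i of B_0 has its only nonzero entry at position (i,i)), then the difference B_k^T B_k − B_0^T B_0 has rank exactly 1 provided λ² ≠ (B_0)_{ii}². -/

import Mathlib

open Matrix

/-- Perfect intervention at a source node: if `B_0` is upper triangular with
positive diagonal, row `i` of `B_0` is nonzero only at position `(i,i)`
(source node), and `B_k = B_0 + eᵢ (λ eᵢ − B₀ᵀ eᵢ)ᵀ` with `λ > 0` and
`λ² ≠ (B₀)ᵢᵢ²`, then `Bₖᵀ Bₖ − B₀ᵀ B₀` has rank exactly 1. -/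
theorem stmt5 (d : ℕ) (B0 Bk : Matrix (Fin d) (Fin d) ℝ) (i : Fin d) (lam : ℝ)
    (hupper : B0.BlockTriangular id) (hdiag : ∀ j, 0 < B0 j j)
    (hsource : ∀ j, j ≠ i → B0 i j = 0)
    (hlam : 0 < lam)
    (hB : Bk = B0 + Matrix.vecMulVec (Pi.single i 1)
        (lam • (Pi.single i 1 : Fin d → ℝ) - B0ᵀ.mulVec (Pi.single i 1)))
    (hne : lam ^ 2 ≠ (B0 i i) ^ 2) :
    (Bkᵀ * Bk - B0ᵀ * B0).rank = 1 := by
  have hc : lam ^ 2 - (B0 i i) ^ 2 ≠ 0 := sub_ne_zero.mpr hne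
  have hmv : ∀ j, B0ᵀ.mulVec (Pi.single i 1) j = B0 i j := by
    intro j
    simp [mulVec, dotProduct, Pi.single_apply, transpose_apply]
  have hrow : ∀ j, Bk i j = if j = i then lam else 0 := by
    intro j
    rw [hB]
    by_cases h : j = i
    · subst h
      simp [vecMulVec_apply, Pi.single_apply, hmv]
    · simp [vecMulVec_apply, Pi.single_apply, hmv, h, hsource j h]
  have hother : ∀ l j, l ≠ i → Bk l j = B0 l j := by
    intro l j hl
    rw [hB]
    simp [vecMulVec_apply, Pi.single_apply, hl]
  have hB0row : ∀ j, B0 i j = if j = i then B0 i i else 0 := by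
    intro j
    by_cases h : j = i
    · subst h; simp
    · simp [h, hsource j h]
  have key : Bkᵀ * Bk - B0ᵀ * B0 =
      diagonal (Pi.single i (lam ^ 2 - (B0 i i) ^ 2)) := by
    ext j k
    have hsum : ∀ (M : Matrix (Fin d) (Fin d) ℝ),
        (Mᵀ * M) j k = ∑ l, M l j * M l k := by
      intro M; simp [Matrix.mul_apply, transpose_apply]
    rw [Matrix.sub_apply, hsum, hsum, ← Finset.sum_sub_distrib]
    have : ∀ l, Bk l j * Bk l k - B0 l j * B0 l k =
        if l = i then (if j = i then lam else 0) * (if k = i then lam else 0)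
          - (if j = i then B0 i i else 0) * (if k = i then B0 i i else 0) else 0 := by
      intro l
      by_cases hl : l = i
      · subst hl
        rw [hrow, hrow, hB0row j, hB0row k, if_pos rfl]
      · rw [hother l j hl, hother l k hl, sub_self, if_neg hl]
    rw [Finset.sum_congr rfl fun l _ => this l, Finset.sum_ite_eq' _ i, if_pos (Finset.mem_univ i)]
    by_cases hj : j = i <;> by_cases hk : k = i
    · subst hj; subst hk; simp [diagonal_apply, Pi.single_apply]; ring
    · simp [hj, hk, diagonal_apply, Ne.symm hk]
    · simp [hj, hk, diagonal_apply]
    · simp [hj, hk, diagonal_apply]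
  rw [key, rank_diagonal]
  rw [Fintype.card_eq_one_iff]
  refine ⟨⟨i, by simpa using hc⟩, ?_⟩
  rintro ⟨j, hj⟩
  have : j = i := by
    by_contra h
    exact hj (by simp [Pi.single_apply, h])
  exact Subtype.ext this
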